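/- Every skew-symmetric derivation of the diamond Lie algebra (g₄, B) is an inner derivation. -/

import Mathlib

lemma coeff_ext4 {L : Type*} [AddCommGroup L] [Module ℂ L] (b : Module.Basis (Fin 4) ℂ L)
    {x0 x1 x2 x3 y0 y1 y2 y3 : ℂ}
    (h : x0•b 0 + x1•b 1 + x2•b 2 + x3•b 3 = y0•b 0 + y1•b 1 + y2•b 2 + y3•b 3) :
    x0 = y0 ∧ x1 = y1 ∧ x2 = y2 ∧ x3 = y3 := by
  have key : ∀ i : Fin 4, b.repr (x0•b 0 + x1•b 1 + x2•b 2 + x3•b 3) i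
      = b.repr (y0•b 0 + y1•b 1 + y2•b 2 + y3•b 3) i := fun i => by rw [h]
  have h0 := key 0; have h1 := key 1; have h2 := key 2; have h3 := key 3
  simp [Finsupp.single_apply] at h0 h1 h2 h3
  exact ⟨h0, h1, h2, h3⟩

lemma expand4 {L : Type*} [AddCommGroup L] [Module ℂ L] (b : Module.Basis (Fin 4) ℂ L) (x : L) :
    x = b.repr x 0 • b 0 + b.repr x 1 • b 1 + b.repr x 2 • b 2 + b.repr x 3 • b 3 := by
  have := b.sum_repr x
  rw [Fin.sum_univ_four] at this
  exact this.symm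

/-- Every skew-symmetric derivation of the diamond Lie algebra `(g₄, B)` is
inner.  The basis is `b 0 = X`, `b 1 = P`, `b 2 = Q`, `b 3 = Z` with brackets
`[X,P]=P`, `[X,Q]=−Q`, `[P,Q]=Z` and form `B(X,Z)=B(P,Q)=1`, other pairings zero. -/
theorem stmt_7 (L : Type*) [LieRing L] [LieAlgebra ℂ L]
    (b : Module.Basis (Fin 4) ℂ L)
    (hXP : ⁅b 0, b 1⁆ = b 1) (hXQ : ⁅b 0, b 2⁆ = -(b 2)) (hPQ : ⁅b 1, b 2⁆ = b 3)
    (hXZ : ⁅b 0, b 3⁆ = 0) (hPZ : ⁅b 1, b 3⁆ = 0) (hQZ : ⁅b 2, b 3⁆ = 0)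
    (B : L →ₗ[ℂ] L →ₗ[ℂ] ℂ)
    (hB : ∀ i j : Fin 4, B (b i) (b j) =
      if (i = 0 ∧ j = 3) ∨ (i = 3 ∧ j = 0) ∨ (i = 1 ∧ j = 2) ∨ (i = 2 ∧ j = 1)
      then 1 else 0)
    (D : L →ₗ[ℂ] L)
    (hder : ∀ x y : L, D ⁅x, y⁆ = ⁅D x, y⁆ + ⁅x, D y⁆)
    (hskew : ∀ x y : L, B (D x) y = - B x (D y)) :
    ∃ W : L, ∀ v : L, D v = ⁅W, v⁆ := by
  have h10 : ⁅b 1, b 0⁆ = -(b 1) := by rw [← lie_skew, hXP]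
  have h20 : ⁅b 2, b 0⁆ = b 2 := by rw [← lie_skew, hXQ, neg_neg]
  have h21 : ⁅b 2, b 1⁆ = -(b 3) := by rw [← lie_skew, hPQ]
  have h30 : ⁅b 3, b 0⁆ = 0 := by rw [← lie_skew, hXZ, neg_zero]
  have h31 : ⁅b 3, b 1⁆ = 0 := by rw [← lie_skew, hPZ, neg_zero]
  have h32 : ⁅b 3, b 2⁆ = 0 := by rw [← lie_skew, hQZ, neg_zero]
  have hE : ∀ j : Fin 4, D (b j) = b.repr (D (b j)) 0 • b 0 + b.repr (D (b j)) 1 • b 1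
      + b.repr (D (b j)) 2 • b 2 + b.repr (D (b j)) 3 • b 3 := fun j => expand4 b (D (b j))
  -- derivation equation from [X,P] = P
  have e1 : b.repr (D (b 1)) 0 • b 0 + b.repr (D (b 1)) 1 • b 1
      + b.repr (D (b 1)) 2 • b 2 + b.repr (D (b 1)) 3 • b 3
      = (0:ℂ) • b 0 + (b.repr (D (b 0)) 0 + b.repr (D (b 1)) 1) • b 1
      + (-(b.repr (D (b 1)) 2)) • b 2 + (-(b.repr (D (b 0)) 2)) • b 3 := by
    have h := hder (b 0) (b 1)
    rw [hXP, hE 0, hE 1] at h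
    simp only [add_lie, lie_add, smul_lie, lie_smul, hXP, hXQ, hPQ, hXZ, hPZ, hQZ,
      h10, h20, h21, h30, h31, h32, lie_self, smul_zero, add_zero, zero_add, smul_neg,
      neg_zero] at h
    linear_combination (norm := module) h
  obtain ⟨c01, c11, c21, c31⟩ := coeff_ext4 b e1
  -- derivation equation from [X,Q] = -Q
  have e2 : (-(b.repr (D (b 2)) 0)) • b 0 + (-(b.repr (D (b 2)) 1)) • b 1
      + (-(b.repr (D (b 2)) 2)) • b 2 + (-(b.repr (D (b 2)) 3)) • b 3
      = (0:ℂ) • b 0 + b.repr (D (b 2)) 1 • b 1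
      + (-(b.repr (D (b 0)) 0) - b.repr (D (b 2)) 2) • b 2 + b.repr (D (b 0)) 1 • b 3 := by
    have h := hder (b 0) (b 2)
    rw [hXQ, map_neg, hE 0, hE 2] at h
    simp only [add_lie, lie_add, smul_lie, lie_smul, hXP, hXQ, hPQ, hXZ, hPZ, hQZ,
      h10, h20, h21, h30, h31, h32, lie_self, smul_zero, add_zero, zero_add, smul_neg,
      neg_zero] at h
    linear_combination (norm := module) h
  obtain ⟨c02, c12, c22, c32⟩ := coeff_ext4 b e2
  -- derivation equation from [P,Q] = Z
  have e3 : b.repr (D (b 3)) 0 • b 0 + b.repr (D (b 3)) 1 • b 1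
      + b.repr (D (b 3)) 2 • b 2 + b.repr (D (b 3)) 3 • b 3
      = (0:ℂ) • b 0 + (-(b.repr (D (b 2)) 0)) • b 1
      + (-(b.repr (D (b 1)) 0)) • b 2
      + (b.repr (D (b 1)) 1 + b.repr (D (b 2)) 2) • b 3 := by
    have h := hder (b 1) (b 2)
    rw [hPQ, hE 1, hE 2, hE 3] at h
    simp only [add_lie, lie_add, smul_lie, lie_smul, hXP, hXQ, hPQ, hXZ, hPZ, hQZ,
      h10, h20, h21, h30, h31, h32, lie_self, smul_zero, add_zero, zero_add, smul_neg,
      neg_zero] at h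
    linear_combination (norm := module) h
  obtain ⟨c03, c13, c23, c33⟩ := coeff_ext4 b e3
  -- skew-symmetry facts
  have s1 : b.repr (D (b 0)) 3 = 0 := by
    have h := hskew (b 0) (b 0)
    rw [hE 0] at h
    simp [hB] at h
    linear_combination (h : (_ : ℂ) = _) / 2
  have s2 : b.repr (D (b 2)) 2 = -(b.repr (D (b 1)) 1) := by
    have h := hskew (b 1) (b 2)
    rw [hE 1, hE 2] at h
    simp [hB] at h
    linear_combination h
  -- simplified scalar facts
  have z00 : b.repr (D (b 0)) 0 = 0 := by linear_combination -c11
  have z21 : b.repr (D (b 1)) 2 = 0 := by linear_combination c21 / 2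
  have z02 : b.repr (D (b 2)) 0 = 0 := by linear_combination -c02
  have z12 : b.repr (D (b 2)) 1 = 0 := by linear_combination -c12 / 2
  have z32 : b.repr (D (b 2)) 3 = -(b.repr (D (b 0)) 1) := by linear_combination -c32
  have z13 : b.repr (D (b 3)) 1 = 0 := by rw [c13, z02, neg_zero]
  have z23 : b.repr (D (b 3)) 2 = 0 := by rw [c23, c01, neg_zero]
  have z33 : b.repr (D (b 3)) 3 = 0 := by rw [c33, s2]; ring
  -- opacify the three remaining scalars
  obtain ⟨q, hq⟩ : ∃ x : ℂ, x = b.repr (D (b 1)) 1 := ⟨_, rfl⟩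
  obtain ⟨β, hβ⟩ : ∃ x : ℂ, x = b.repr (D (b 0)) 1 := ⟨_, rfl⟩
  obtain ⟨γ, hγ⟩ : ∃ x : ℂ, x = b.repr (D (b 0)) 2 := ⟨_, rfl⟩
  have hd0 : D (b 0) = β • b 1 + γ • b 2 := by
    conv_lhs => rw [hE 0]
    rw [z00, s1, ← hβ, ← hγ]
    module
  have hd1 : D (b 1) = q • b 1 + (-γ) • b 3 := by
    conv_lhs => rw [hE 1]
    rw [c01, z21, c31, ← hq, ← hγ]
    module
  have hd2 : D (b 2) = (-q) • b 2 + (-β) • b 3 := by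
    conv_lhs => rw [hE 2]
    rw [z02, z12, s2, z32, ← hq, ← hβ]
    module
  have hd3 : D (b 3) = 0 := by
    conv_lhs => rw [hE 3]
    rw [c03, z13, z23, z33]
    module
  refine ⟨q • b 0 + (-β) • b 1 + γ • b 2, fun v => ?_⟩
  conv_lhs => rw [expand4 b v]
  conv_rhs => rw [expand4 b v]
  simp only [map_add, map_smul, hd0, hd1, hd2, hd3, lie_add, lie_smul, add_lie, smul_lie,
    hXP, hXQ, hPQ, hXZ, hPZ, hQZ, h10, h20, h21, h30, h31, h32, lie_self, smul_zero,
    add_zero, zero_add, smul_neg, neg_zero, smul_add]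
  module
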